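/- Any system with exactly two contents q1 and q2 and three contexts — a context c0 in which both q1 and q2 are measured, a context c1 in which only q1 is measured, and a context c2 in which only q2 is measured — with finite value sets and arbitrary context distributions, is CbD-noncontextual: it admits a multimaximally connected coupling. (In particular, every factual–counterfactual subsystem of a cyclic system of rank 3 is noncontextual, so every such cyclic system satisfies generalized counterfactual definiteness even when it is contextual.) -/

import Mathlib

open Finset

/-- A probability distribution on a finite type, given by a real-valued mass function:
nonnegative and summing to one. -/
def IsDist {α : Type} [Fintype α] (d : α → ℝ) : Prop :=
  (∀ a, 0 ≤ d a) ∧ ∑ a, d a = 1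

/-- The pushforward (marginal) of a mass function along a map. -/
def margin {α β : Type} [Fintype α] [DecidableEq β] (d : α → ℝ) (f : α → β) : β → ℝ :=
  fun b => ∑ a ∈ univ.filter (fun a => f a = b), d a

/-- `γ` is a coupling of the system `(μ c)_{c ∈ C}`: a probability measure on the product
over all pairs `(q, c)` with `q ≺ c` of `V q`, whose marginal on the coordinates of each
context `c` equals `μ c`. -/
def IsCoupling {Q C : Type} [Fintype Q] [DecidableEq Q] [Fintype C] [DecidableEq C]
    (mea : Q → C → Bool) (V : Q → Type) [∀ q, Fintype (V q)] [∀ q, DecidableEq (V q)]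
    (μ : ∀ c : C, (∀ q : {q : Q // mea q c}, V q.1) → ℝ)
    (γ : (∀ p : {p : Q × C // mea p.1 p.2}, V p.1.1) → ℝ) : Prop :=
  IsDist γ ∧
  ∀ c : C, margin γ (fun x (q : {q : Q // mea q c}) => x ⟨(q.1, c), q.2⟩) = μ c

/-- `γ` is multimaximally connected: for every content `q` and contexts `c, c'` in which
`q` is measured, the `γ`-probability that the `(q, c)`-coordinate equals the
`(q, c')`-coordinate is the greatest diagonal probability over all couplings of the
`q`-marginal of `μ c` with the `q`-marginal of `μ c'`. -/
def IsMultimaximal {Q C : Type} [Fintype Q] [DecidableEq Q] [Fintype C] [DecidableEq C]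
    (mea : Q → C → Bool) (V : Q → Type) [∀ q, Fintype (V q)] [∀ q, DecidableEq (V q)]
    (μ : ∀ c : C, (∀ q : {q : Q // mea q c}, V q.1) → ℝ)
    (γ : (∀ p : {p : Q × C // mea p.1 p.2}, V p.1.1) → ℝ) : Prop :=
  ∀ (q : Q) (c c' : C) (h : mea q c) (h' : mea q c'),
    IsGreatest
      {r : ℝ | ∃ ν : V q × V q → ℝ, IsDist ν ∧
          margin ν Prod.fst = margin (μ c) (fun x => x ⟨q, h⟩) ∧
          margin ν Prod.snd = margin (μ c') (fun x => x ⟨q, h'⟩) ∧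
          r = ∑ v : V q, ν (v, v)}
      (∑ x ∈ univ.filter
          (fun x : ∀ p : {p : Q × C // mea p.1 p.2}, V p.1.1 =>
            x ⟨(q, c), h⟩ = x ⟨(q, c'), h'⟩), γ x)

/-- A system is CbD-noncontextual if it has a multimaximally connected coupling. -/
def CbDNoncontextual {Q C : Type} [Fintype Q] [DecidableEq Q] [Fintype C] [DecidableEq C]
    (mea : Q → C → Bool) (V : Q → Type) [∀ q, Fintype (V q)] [∀ q, DecidableEq (V q)]
    (μ : ∀ c : C, (∀ q : {q : Q // mea q c}, V q.1) → ℝ) : Prop :=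
  ∃ γ, IsCoupling mea V μ γ ∧ IsMultimaximal mea V μ γ


/-- Measurement relation for a system with two contents `0, 1` (i.e., `q₁, q₂`) and three
contexts: context `0` measures both contents, context `1` measures only content `0`, and
context `2` measures only content `1`. -/
def mea3 (q : Fin 2) (c : Fin 3) : Bool :=
  c == 0 || (c == 1 && q == 0) || (c == 2 && q == 1)


set_option linter.unusedSectionVars false
set_option linter.unusedVariables false

namespace CbD3

variable {α β : Type} [Fintype α] [DecidableEq α] [Fintype β] [DecidableEq β]

lemma margin_apply (d : α → ℝ) (f : α → β) (b : β) :
    margin d f b = ∑ a, if f a = b then d a else 0 := by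
  rw [margin, Finset.sum_filter]

lemma sum_margin (d : α → ℝ) (f : α → β) : ∑ b, margin d f b = ∑ a, d a :=
  Finset.sum_fiberwise univ f d

lemma margin_nonneg {d : α → ℝ} (hd : ∀ a, 0 ≤ d a) (f : α → β) (b : β) :
    0 ≤ margin d f b :=
  Finset.sum_nonneg fun a _ => hd a

lemma isDist_margin {d : α → ℝ} (hd : IsDist d) (f : α → β) : IsDist (margin d f) :=
  ⟨margin_nonneg hd.1 f, by rw [sum_margin]; exact hd.2⟩

lemma margin_fst (d : α × β → ℝ) (a : α) : margin d Prod.fst a = ∑ b, d (a, b) := by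
  rw [margin_apply, Fintype.sum_prod_type, Finset.sum_comm]
  simp

lemma margin_snd (d : α × β → ℝ) (b : β) : margin d Prod.snd b = ∑ a, d (a, b) := by
  rw [margin_apply, Fintype.sum_prod_type]
  try dsimp only
  simp

lemma single_le_margin_fst {d : α × β → ℝ} (hd : ∀ x, 0 ≤ d x) (a : α) (b : β) :
    d (a, b) ≤ margin d Prod.fst a := by
  rw [margin_fst]
  exact Finset.single_le_sum (fun b _ => hd (a, b)) (mem_univ b)

lemma single_le_margin_snd {d : α × β → ℝ} (hd : ∀ x, 0 ≤ d x) (a : α) (b : β) :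
    d (a, b) ≤ margin d Prod.snd b := by
  rw [margin_snd]
  exact Finset.single_le_sum (fun a _ => hd (a, b)) (mem_univ a)

/-! ### Maximal coupling of two distributions on the same type -/

noncomputable def mdiag (p q : α → ℝ) : ℝ := ∑ v, min (p v) (q v)

lemma mdiag_comm (p q : α → ℝ) : mdiag p q = mdiag q p := by
  unfold mdiag; simp_rw [min_comm]

noncomputable def maxCoupling (p q : α → ℝ) : α × α → ℝ := fun x =>
  (if x.1 = x.2 then min (p x.1) (q x.1) else 0) +
    (p x.1 - min (p x.1) (q x.1)) * (q x.2 - min (p x.2) (q x.2)) / (1 - mdiag p q)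

variable {p q : α → ℝ}

lemma sum_p_sub_min (hp : IsDist p) : ∑ v, (p v - min (p v) (q v)) = 1 - mdiag p q := by
  rw [Finset.sum_sub_distrib, hp.2, mdiag]

lemma sum_q_sub_min (hq : IsDist q) : ∑ v, (q v - min (p v) (q v)) = 1 - mdiag p q := by
  rw [Finset.sum_sub_distrib, hq.2, mdiag]

lemma p_sub_min_eq_zero (hp : IsDist p) (hs : 1 - mdiag p q = 0) (u : α) :
    p u - min (p u) (q u) = 0 := by
  have h := sum_p_sub_min (q := q) hp
  rw [hs] at h
  exact (Finset.sum_eq_zero_iff_of_nonneg (fun v _ => by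
    simp [sub_nonneg, min_le_left])).mp h u (mem_univ u)

lemma mdiag_le_one (hp : IsDist p) : mdiag p q ≤ 1 := by
  rw [← hp.2, mdiag]; exact Finset.sum_le_sum fun v _ => min_le_left _ _

lemma maxCoupling_nonneg (hp : IsDist p) (hq : IsDist q) (x : α × α) :
    0 ≤ maxCoupling p q x := by
  unfold maxCoupling
  have h1 : mdiag p q ≤ 1 := mdiag_le_one hp
  apply add_nonneg
  · split
    · exact le_min (hp.1 _) (hq.1 _)
    · exact le_refl 0
  · apply div_nonneg
    · apply mul_nonneg <;> simp [sub_nonneg, min_le_left, min_le_right]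
    · linarith

lemma maxCoupling_margin_fst (hp : IsDist p) (hq : IsDist q) :
    margin (maxCoupling p q) Prod.fst = p := by
  funext a
  rw [margin_fst]
  unfold maxCoupling
  rw [Finset.sum_add_distrib]
  have e1 : ∑ b, (if a = b then min (p a) (q a) else 0) = min (p a) (q a) := by simp
  have e2 : ∑ b, (p a - min (p a) (q a)) * (q b - min (p b) (q b)) / (1 - mdiag p q)
      = p a - min (p a) (q a) := by
    rw [← Finset.sum_div, ← Finset.mul_sum, sum_q_sub_min hq]
    by_cases hs : 1 - mdiag p q = 0
    · rw [hs, p_sub_min_eq_zero hp hs]; simp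
    · rw [mul_div_assoc, div_self hs, mul_one]
  rw [e1, e2]
  ring

lemma maxCoupling_margin_snd (hp : IsDist p) (hq : IsDist q) :
    margin (maxCoupling p q) Prod.snd = q := by
  funext b
  rw [margin_snd]
  unfold maxCoupling
  rw [Finset.sum_add_distrib]
  have e1 : ∑ a, (if a = b then min (p a) (q a) else 0) = min (p b) (q b) := by
    rw [Finset.sum_ite_eq' univ b fun a => min (p a) (q a)]; simp
  have e2 : ∑ a, (p a - min (p a) (q a)) * (q b - min (p b) (q b)) / (1 - mdiag p q)
      = q b - min (p b) (q b) := by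
    simp_rw [div_eq_mul_inv]
    rw [← Finset.sum_mul, ← Finset.sum_mul, sum_p_sub_min hp]
    by_cases hs : 1 - mdiag p q = 0
    · have h0 : q b - min (p b) (q b) = 0 := by
        have h := sum_q_sub_min (p := p) hq
        rw [hs] at h
        exact (Finset.sum_eq_zero_iff_of_nonneg (fun v _ => by
          simp [sub_nonneg, min_le_right])).mp h b (mem_univ b)
      rw [hs, h0]; simp
    · rw [mul_comm (1 - mdiag p q), mul_assoc, mul_inv_cancel₀ hs, mul_one]
  rw [e1, e2]
  ring

lemma maxCoupling_isDist (hp : IsDist p) (hq : IsDist q) : IsDist (maxCoupling p q) := by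
  refine ⟨maxCoupling_nonneg hp hq, ?_⟩
  rw [← sum_margin (maxCoupling p q) Prod.fst, maxCoupling_margin_fst hp hq, hp.2]

lemma maxCoupling_diag (hp : IsDist p) (hq : IsDist q) :
    ∑ v, maxCoupling p q (v, v) = mdiag p q := by
  unfold maxCoupling mdiag
  have e : ∀ v, (p v - min (p v) (q v)) * (q v - min (p v) (q v)) = 0 := fun v => by
    rcases min_choice (p v) (q v) with h | h <;> rw [h] <;> ring
  simp only [if_pos rfl]
  simp [e]

lemma diag_le_mdiag {ν : α × α → ℝ} (hν : IsDist ν)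
    (h1 : margin ν Prod.fst = p) (h2 : margin ν Prod.snd = q) :
    ∑ v, ν (v, v) ≤ mdiag p q := by
  apply Finset.sum_le_sum
  intro v _
  apply le_min
  · rw [← h1]; exact single_le_margin_fst hν.1 v v
  · rw [← h2]; exact single_le_margin_snd hν.1 v v

lemma isGreatest_mdiag (hp : IsDist p) (hq : IsDist q) :
    IsGreatest
      {r : ℝ | ∃ ν : α × α → ℝ, IsDist ν ∧
          margin ν Prod.fst = p ∧ margin ν Prod.snd = q ∧ r = ∑ v, ν (v, v)}
      (mdiag p q) := by
  constructor
  · exact ⟨maxCoupling p q, maxCoupling_isDist hp hq, maxCoupling_margin_fst hp hq,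
      maxCoupling_margin_snd hp hq, (maxCoupling_diag hp hq).symm⟩
  · rintro r ⟨ν, hν, h1, h2, rfl⟩
    exact diag_le_mdiag hν h1 h2

/-! ### Conditional kernel -/

noncomputable def condK (ν : α × β → ℝ) (p : α → ℝ) (r : β → ℝ) : α → β → ℝ :=
  fun u y => if p u = 0 then r y else ν (u, y) / p u

lemma condK_nonneg {ν : α × β → ℝ} {p : α → ℝ} {r : β → ℝ}
    (hν : ∀ x, 0 ≤ ν x) (hp : ∀ a, 0 ≤ p a) (hr : ∀ b, 0 ≤ r b) (u : α) (y : β) :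
    0 ≤ condK ν p r u y := by
  unfold condK
  split
  · exact hr y
  · exact div_nonneg (hν _) (hp _)

lemma condK_mul {ν : α × β → ℝ} {p : α → ℝ} {r : β → ℝ}
    (hν : ∀ x, 0 ≤ ν x) (h1 : margin ν Prod.fst = p) (u : α) (y : β) :
    p u * condK ν p r u y = ν (u, y) := by
  unfold condK
  by_cases h : p u = 0
  · rw [if_pos h, h, zero_mul]
    have hle : ν (u, y) ≤ p u := by rw [← h1]; exact single_le_margin_fst hν u y
    have := hν (u, y)
    rw [h] at hle
    linarith
  · rw [if_neg h, mul_comm, div_mul_cancel₀ _ h]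

lemma condK_sum {ν : α × β → ℝ} {p : α → ℝ} {r : β → ℝ}
    (hr : IsDist r) (h1 : margin ν Prod.fst = p) (u : α) :
    ∑ y, condK ν p r u y = 1 := by
  unfold condK
  by_cases h : p u = 0
  · simp [h, hr.2]
  · simp only [if_neg h]
    rw [← Finset.sum_div]
    have : ∑ y, ν (u, y) = p u := by rw [← margin_fst, h1]
    rw [this, div_self h]



/-! ### The two-stage coupling on the product picture -/

section GP

variable (m0 : α × β → ℝ) (m1 : α → ℝ) (m2 : β → ℝ)

noncomputable def K1 : α → α → ℝ :=
  condK (maxCoupling (margin m0 Prod.fst) m1) (margin m0 Prod.fst) m1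

noncomputable def K2 : β → β → ℝ :=
  condK (maxCoupling (margin m0 Prod.snd) m2) (margin m0 Prod.snd) m2

noncomputable def gp : (α × β) × α × β → ℝ := fun y =>
  m0 y.1 * (K1 m0 m1 y.1.1 y.2.1 * K2 m0 m2 y.1.2 y.2.2)

lemma K1_sum (h0 : IsDist m0) (h1 : IsDist m1) (a : α) : ∑ c, K1 m0 m1 a c = 1 :=
  condK_sum h1 (maxCoupling_margin_fst (isDist_margin h0 Prod.fst) h1) a

lemma K2_sum (h0 : IsDist m0) (h2 : IsDist m2) (b : β) : ∑ d, K2 m0 m2 b d = 1 :=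
  condK_sum h2 (maxCoupling_margin_fst (isDist_margin h0 Prod.snd) h2) b

lemma K1_mul (h0 : IsDist m0) (h1 : IsDist m1) (a c : α) :
    margin m0 Prod.fst a * K1 m0 m1 a c = maxCoupling (margin m0 Prod.fst) m1 (a, c) :=
  condK_mul (maxCoupling_nonneg (isDist_margin h0 Prod.fst) h1)
    (maxCoupling_margin_fst (isDist_margin h0 Prod.fst) h1) a c

lemma K2_mul (h0 : IsDist m0) (h2 : IsDist m2) (b d : β) :
    margin m0 Prod.snd b * K2 m0 m2 b d = maxCoupling (margin m0 Prod.snd) m2 (b, d) :=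
  condK_mul (maxCoupling_nonneg (isDist_margin h0 Prod.snd) h2)
    (maxCoupling_margin_fst (isDist_margin h0 Prod.snd) h2) b d

lemma K1_nonneg (h0 : IsDist m0) (h1 : IsDist m1) (a c : α) : 0 ≤ K1 m0 m1 a c :=
  condK_nonneg (maxCoupling_nonneg (isDist_margin h0 Prod.fst) h1)
    (margin_nonneg h0.1 Prod.fst) h1.1 a c

lemma K2_nonneg (h0 : IsDist m0) (h2 : IsDist m2) (b d : β) : 0 ≤ K2 m0 m2 b d :=
  condK_nonneg (maxCoupling_nonneg (isDist_margin h0 Prod.snd) h2)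
    (margin_nonneg h0.1 Prod.snd) h2.1 b d

lemma gp_nonneg (h0 : IsDist m0) (h1 : IsDist m1) (h2 : IsDist m2)
    (y : (α × β) × α × β) : 0 ≤ gp m0 m1 m2 y :=
  mul_nonneg (h0.1 _)
    (mul_nonneg (K1_nonneg m0 m1 h0 h1 _ _) (K2_nonneg m0 m2 h0 h2 _ _))

lemma gp_sum_pair (h0 : IsDist m0) (h1 : IsDist m1) (h2 : IsDist m2) (z : α × β) :
    ∑ w : α × β, gp m0 m1 m2 (z, w) = m0 z := by
  rw [Fintype.sum_prod_type]
  try dsimp only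
  unfold gp
  try dsimp only
  simp only [← Finset.mul_sum]
  simp only [K2_sum m0 m2 h0 h2, mul_one]
  rw [K1_sum m0 m1 h0 h1, mul_one]

lemma gp_isDist (h0 : IsDist m0) (h1 : IsDist m1) (h2 : IsDist m2) :
    IsDist (gp m0 m1 m2) := by
  refine ⟨gp_nonneg m0 m1 m2 h0 h1 h2, ?_⟩
  rw [Fintype.sum_prod_type]
  try dsimp only
  simp only [gp_sum_pair m0 m1 m2 h0 h1 h2]
  exact h0.2

lemma gp_margin_pair (h0 : IsDist m0) (h1 : IsDist m1) (h2 : IsDist m2) :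
    margin (gp m0 m1 m2) (fun y => y.1) = m0 := by
  funext z
  rw [margin_apply, Fintype.sum_prod_type]
  try dsimp only
  rw [Finset.sum_congr rfl fun x _ => Finset.sum_ite_irrel _ _ _ _]; simp only [Finset.sum_const_zero]
  rw [Finset.sum_ite_eq' univ z (fun ab => ∑ w : α × β, gp m0 m1 m2 (ab, w))]
  simp [gp_sum_pair m0 m1 m2 h0 h1 h2]

lemma gp_margin_21 (h0 : IsDist m0) (h1 : IsDist m1) (h2 : IsDist m2) :
    margin (gp m0 m1 m2) (fun y => y.2.1) = m1 := by
  funext a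
  rw [margin_apply, Fintype.sum_prod_type]
  try dsimp only
  have step : ∀ z : α × β, ∑ w : α × β, (if w.1 = a then gp m0 m1 m2 (z, w) else 0)
      = m0 z * K1 m0 m1 z.1 a := by
    intro z
    rw [Fintype.sum_prod_type]
    try dsimp only
    unfold gp
    try dsimp only
    rw [Finset.sum_congr rfl fun x _ => Finset.sum_ite_irrel _ _ _ _]
    simp only [Finset.sum_ite_irrel, Finset.sum_const_zero, ← Finset.mul_sum]
    simp only [K2_sum m0 m2 h0 h2, mul_one]
    rw [Finset.sum_ite_eq' univ a (fun c => m0 z * K1 m0 m1 z.1 c)]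
    simp
  simp only [step]
  rw [Fintype.sum_prod_type]
  try dsimp only
  have step2 : ∀ a' : α, ∑ b, m0 (a', b) * K1 m0 m1 a' a
      = maxCoupling (margin m0 Prod.fst) m1 (a', a) := by
    intro a'
    rw [← Finset.sum_mul, ← margin_fst, K1_mul m0 m1 h0 h1]
  simp only [step2]
  rw [← margin_snd, maxCoupling_margin_snd (isDist_margin h0 Prod.fst) h1]

lemma gp_margin_22 (h0 : IsDist m0) (h1 : IsDist m1) (h2 : IsDist m2) :
    margin (gp m0 m1 m2) (fun y => y.2.2) = m2 := by
  funext bb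
  rw [margin_apply, Fintype.sum_prod_type]
  try dsimp only
  have step : ∀ z : α × β, ∑ w : α × β, (if w.2 = bb then gp m0 m1 m2 (z, w) else 0)
      = m0 z * K2 m0 m2 z.2 bb := by
    intro z
    rw [Fintype.sum_prod_type]
    try dsimp only
    unfold gp
    try dsimp only
    have inner : ∀ c : α,
        ∑ d, (if d = bb then m0 z * (K1 m0 m1 z.1 c * K2 m0 m2 z.2 d) else 0)
        = m0 z * (K1 m0 m1 z.1 c * K2 m0 m2 z.2 bb) := by
      intro c
      rw [Finset.sum_ite_eq' univ bb (fun d => m0 z * (K1 m0 m1 z.1 c * K2 m0 m2 z.2 d))]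
      simp
    simp only [inner]
    simp only [mul_comm (K1 m0 m1 z.1 _) (K2 m0 m2 z.2 bb), ← mul_assoc]
    rw [← Finset.mul_sum, K1_sum m0 m1 h0 h1, mul_one]
  simp only [step]
  rw [Fintype.sum_prod_type, Finset.sum_comm]
  have step2 : ∀ b' : β, ∑ a', m0 (a', b') * K2 m0 m2 b' bb
      = maxCoupling (margin m0 Prod.snd) m2 (b', bb) := by
    intro b'
    rw [← Finset.sum_mul, ← margin_snd, K2_mul m0 m2 h0 h2]
  simp only [step2]
  rw [← margin_snd, maxCoupling_margin_snd (isDist_margin h0 Prod.snd) h2]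

lemma gp_diag1 (h0 : IsDist m0) (h1 : IsDist m1) (h2 : IsDist m2) :
    ∑ y ∈ univ.filter (fun y : (α × β) × α × β => y.1.1 = y.2.1), gp m0 m1 m2 y
      = mdiag (margin m0 Prod.fst) m1 := by
  rw [Finset.sum_filter, Fintype.sum_prod_type]
  try dsimp only
  have step : ∀ z : α × β, ∑ w : α × β, (if z.1 = w.1 then gp m0 m1 m2 (z, w) else 0)
      = m0 z * K1 m0 m1 z.1 z.1 := by
    intro z
    rw [Fintype.sum_prod_type]
    try dsimp only
    unfold gp
    try dsimp only
    rw [Finset.sum_congr rfl fun x _ => Finset.sum_ite_irrel _ _ _ _]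
    simp only [Finset.sum_ite_irrel, Finset.sum_const_zero, ← Finset.mul_sum]
    simp only [K2_sum m0 m2 h0 h2, mul_one]
    rw [Finset.sum_ite_eq univ z.1 (fun c => m0 z * K1 m0 m1 z.1 c)]
    simp
  simp only [step]
  rw [Fintype.sum_prod_type]
  try dsimp only
  have step2 : ∀ a' : α, ∑ b, m0 (a', b) * K1 m0 m1 a' a'
      = maxCoupling (margin m0 Prod.fst) m1 (a', a') := by
    intro a'
    rw [← Finset.sum_mul, ← margin_fst, K1_mul m0 m1 h0 h1]
  simp only [step2]
  exact maxCoupling_diag (isDist_margin h0 Prod.fst) h1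

lemma gp_diag2 (h0 : IsDist m0) (h1 : IsDist m1) (h2 : IsDist m2) :
    ∑ y ∈ univ.filter (fun y : (α × β) × α × β => y.1.2 = y.2.2), gp m0 m1 m2 y
      = mdiag (margin m0 Prod.snd) m2 := by
  rw [Finset.sum_filter, Fintype.sum_prod_type]
  try dsimp only
  have step : ∀ z : α × β, ∑ w : α × β, (if z.2 = w.2 then gp m0 m1 m2 (z, w) else 0)
      = m0 z * K2 m0 m2 z.2 z.2 := by
    intro z
    rw [Fintype.sum_prod_type]
    try dsimp only
    unfold gp
    try dsimp only
    have inner : ∀ c : α,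
        ∑ d, (if z.2 = d then m0 z * (K1 m0 m1 z.1 c * K2 m0 m2 z.2 d) else 0)
        = m0 z * (K1 m0 m1 z.1 c * K2 m0 m2 z.2 z.2) := by
      intro c
      rw [Finset.sum_ite_eq univ z.2 (fun d => m0 z * (K1 m0 m1 z.1 c * K2 m0 m2 z.2 d))]
      simp
    simp only [inner]
    simp only [mul_comm (K1 m0 m1 z.1 _) (K2 m0 m2 z.2 z.2), ← mul_assoc]
    rw [← Finset.mul_sum, K1_sum m0 m1 h0 h1, mul_one]
  simp only [step]
  rw [Fintype.sum_prod_type, Finset.sum_comm]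
  have step2 : ∀ b' : β, ∑ a', m0 (a', b') * K2 m0 m2 b' b'
      = maxCoupling (margin m0 Prod.snd) m2 (b', b') := by
    intro b'
    rw [← Finset.sum_mul, ← margin_snd, K2_mul m0 m2 h0 h2]
  simp only [step2]
  exact maxCoupling_diag (isDist_margin h0 Prod.snd) h2

end GP

end CbD3

namespace CbD3

section Specific

variable (V : Fin 2 → Type) [∀ q, Fintype (V q)] [∀ q, DecidableEq (V q)]

abbrev PiAll := ∀ p : {p : Fin 2 × Fin 3 // mea3 p.1 p.2}, V p.1.1
abbrev Pi0 := ∀ q : {q : Fin 2 // mea3 q 0}, V q.1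
abbrev Pi1 := ∀ q : {q : Fin 2 // mea3 q 1}, V q.1
abbrev Pi2 := ∀ q : {q : Fin 2 // mea3 q 2}, V q.1

def toProdA (x : PiAll V) : (V 0 × V 1) × V 0 × V 1 :=
  ((x ⟨(0, 0), by decide⟩, x ⟨(1, 0), by decide⟩),
    x ⟨(0, 1), by decide⟩, x ⟨(1, 2), by decide⟩)

def ofProdA (v : (V 0 × V 1) × V 0 × V 1) : PiAll V := fun p =>
  match p with
  | ⟨(⟨0, _⟩, ⟨0, _⟩), _⟩ => v.1.1
  | ⟨(⟨1, _⟩, ⟨0, _⟩), _⟩ => v.1.2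
  | ⟨(⟨0, _⟩, ⟨1, _⟩), _⟩ => v.2.1
  | ⟨(⟨1, _⟩, ⟨2, _⟩), _⟩ => v.2.2
  | ⟨(⟨0, _⟩, ⟨2, _⟩), h⟩ => nomatch h
  | ⟨(⟨1, _⟩, ⟨1, _⟩), h⟩ => nomatch h
  | ⟨(⟨_ + 2, hq⟩, _), _⟩ => absurd hq (by omega)
  | ⟨(_, ⟨_ + 3, hc⟩), _⟩ => absurd hc (by omega)

def EA : PiAll V ≃ (V 0 × V 1) × V 0 × V 1 where
  toFun := toProdA V
  invFun := ofProdA V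
  left_inv := by
    intro x
    funext p
    obtain ⟨⟨q, c⟩, h⟩ := p
    fin_cases q <;> fin_cases c <;> first | rfl | exact absurd h (by decide)
  right_inv := fun v => rfl

def toProd0 (z : Pi0 V) : V 0 × V 1 := (z ⟨0, by decide⟩, z ⟨1, by decide⟩)

def ofProd0 (v : V 0 × V 1) : Pi0 V := fun q =>
  match q with
  | ⟨⟨0, _⟩, _⟩ => v.1
  | ⟨⟨1, _⟩, _⟩ => v.2
  | ⟨⟨_ + 2, hq⟩, _⟩ => absurd hq (by omega)

def E0 : Pi0 V ≃ V 0 × V 1 where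
  toFun := toProd0 V
  invFun := ofProd0 V
  left_inv := by
    intro z
    funext q
    obtain ⟨q, h⟩ := q
    fin_cases q <;> rfl
  right_inv := fun v => rfl

def toProd1 (z : Pi1 V) : V 0 := z ⟨0, by decide⟩

def ofProd1 (a : V 0) : Pi1 V := fun q =>
  match q with
  | ⟨⟨0, _⟩, _⟩ => a
  | ⟨⟨1, _⟩, h⟩ => nomatch h
  | ⟨⟨_ + 2, hq⟩, _⟩ => absurd hq (by omega)

def E1 : Pi1 V ≃ V 0 where
  toFun := toProd1 V
  invFun := ofProd1 V
  left_inv := by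
    intro z
    funext q
    obtain ⟨q, h⟩ := q
    fin_cases q
    · rfl
    · exact absurd h (by decide)
  right_inv := fun v => rfl

def toProd2 (z : Pi2 V) : V 1 := z ⟨1, by decide⟩

def ofProd2 (b : V 1) : Pi2 V := fun q =>
  match q with
  | ⟨⟨0, _⟩, h⟩ => nomatch h
  | ⟨⟨1, _⟩, _⟩ => b
  | ⟨⟨_ + 2, hq⟩, _⟩ => absurd hq (by omega)

def E2 : Pi2 V ≃ V 1 where
  toFun := toProd2 V
  invFun := ofProd2 V
  left_inv := by
    intro z
    funext q
    obtain ⟨q, h⟩ := q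
    fin_cases q
    · exact absurd h (by decide)
    · rfl
  right_inv := fun v => rfl

end Specific

end CbD3

namespace CbD3

lemma filter_sum_equiv {ι κ : Type} [Fintype ι] [Fintype κ] (e : ι ≃ κ)
    (P : ι → Prop) [DecidablePred P] (Q : κ → Prop) [DecidablePred Q]
    (hPQ : ∀ i, P i ↔ Q (e i)) (g : κ → ℝ) :
    ∑ i ∈ univ.filter P, g (e i) = ∑ j ∈ univ.filter Q, g j := by
  rw [Finset.sum_filter, Finset.sum_filter, ← Equiv.sum_comp e (fun j => if Q j then g j else 0)]
  refine Finset.sum_congr rfl fun i _ => ?_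
  by_cases h : P i
  · rw [if_pos h, if_pos ((hPQ i).mp h)]
  · rw [if_neg h, if_neg (fun hq => h ((hPQ i).mpr hq))]

section Main

variable (V : Fin 2 → Type) [∀ q, Fintype (V q)] [∀ q, DecidableEq (V q)]
variable (μ : ∀ c : Fin 3, (∀ q : {q : Fin 2 // mea3 q c}, V q.1) → ℝ)

noncomputable def M0 : V 0 × V 1 → ℝ := fun v => μ 0 (ofProd0 V v)
noncomputable def M1 : V 0 → ℝ := fun a => μ 1 (ofProd1 V a)
noncomputable def M2 : V 1 → ℝ := fun b => μ 2 (ofProd2 V b)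

noncomputable def Γ : PiAll V → ℝ := fun x =>
  gp (M0 V μ) (M1 V μ) (M2 V μ) (EA V x)

lemma M0_isDist (hdist : ∀ c, IsDist (μ c)) : IsDist (M0 V μ) := by
  refine ⟨fun v => (hdist 0).1 _, ?_⟩
  rw [show (∑ v, M0 V μ v) = ∑ v, μ 0 ((E0 V).symm v) from rfl,
    Equiv.sum_comp (E0 V).symm (μ 0)]
  exact (hdist 0).2

lemma M1_isDist (hdist : ∀ c, IsDist (μ c)) : IsDist (M1 V μ) := by
  refine ⟨fun v => (hdist 1).1 _, ?_⟩
  rw [show (∑ v, M1 V μ v) = ∑ v, μ 1 ((E1 V).symm v) from rfl,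
    Equiv.sum_comp (E1 V).symm (μ 1)]
  exact (hdist 1).2

lemma M2_isDist (hdist : ∀ c, IsDist (μ c)) : IsDist (M2 V μ) := by
  refine ⟨fun v => (hdist 2).1 _, ?_⟩
  rw [show (∑ v, M2 V μ v) = ∑ v, μ 2 ((E2 V).symm v) from rfl,
    Equiv.sum_comp (E2 V).symm (μ 2)]
  exact (hdist 2).2

lemma Γ_isDist (hdist : ∀ c, IsDist (μ c)) : IsDist (Γ V μ) := by
  have hgp := gp_isDist (M0 V μ) (M1 V μ) (M2 V μ) (M0_isDist V μ hdist)
    (M1_isDist V μ hdist) (M2_isDist V μ hdist)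
  refine ⟨fun x => hgp.1 _, ?_⟩
  rw [show (∑ x, Γ V μ x) = ∑ x, gp (M0 V μ) (M1 V μ) (M2 V μ) (EA V x) from rfl,
    Equiv.sum_comp (EA V)]
  exact hgp.2

lemma Γ_coupling0 (hdist : ∀ c, IsDist (μ c)) :
    margin (Γ V μ) (fun x (q : {q : Fin 2 // mea3 q 0}) => x ⟨(q.1, 0), q.2⟩) = μ 0 := by
  funext z
  rw [margin]
  calc ∑ x ∈ univ.filter (fun x : PiAll V => (fun q : {q : Fin 2 // mea3 q 0} => x ⟨(q.1, 0), q.2⟩) = z), Γ V μ x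
      = ∑ y ∈ univ.filter (fun y : (V 0 × V 1) × V 0 × V 1 => y.1 = E0 V z),
          gp (M0 V μ) (M1 V μ) (M2 V μ) y := by
        refine filter_sum_equiv (EA V) _ _ (fun x => ?_) _
        constructor
        · intro hh
          rw [show (EA V x).1 = E0 V ((fun q : {q : Fin 2 // mea3 q 0} => x ⟨(q.1, 0), q.2⟩)) from rfl, hh]
        · intro hh
          exact (E0 V).injective
            (show E0 V (fun q : {q : Fin 2 // mea3 q 0} => x ⟨(q.1, 0), q.2⟩) = E0 V z from hh)
    _ = margin (gp (M0 V μ) (M1 V μ) (M2 V μ)) (fun y => y.1) (E0 V z) := by rw [margin]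
    _ = M0 V μ (E0 V z) := by
        rw [gp_margin_pair (M0 V μ) (M1 V μ) (M2 V μ) (M0_isDist V μ hdist)
          (M1_isDist V μ hdist) (M2_isDist V μ hdist)]
    _ = μ 0 z := congrArg (μ 0) ((E0 V).left_inv z)

end Main

end CbD3

namespace CbD3

section Main2

variable {α : Type} [Fintype α] [DecidableEq α]

lemma mdiag_self {p : α → ℝ} (hp : IsDist p) : mdiag p p = 1 := by
  unfold mdiag
  simp only [min_self]
  exact hp.2

variable (V : Fin 2 → Type) [∀ q, Fintype (V q)] [∀ q, DecidableEq (V q)]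
variable (μ : ∀ c : Fin 3, (∀ q : {q : Fin 2 // mea3 q c}, V q.1) → ℝ)

lemma Γ_coupling1 (hdist : ∀ c, IsDist (μ c)) :
    margin (Γ V μ) (fun x (q : {q : Fin 2 // mea3 q 1}) => x ⟨(q.1, 1), q.2⟩) = μ 1 := by
  funext z
  rw [margin]
  calc ∑ x ∈ univ.filter
        (fun x : PiAll V => (fun q : {q : Fin 2 // mea3 q 1} => x ⟨(q.1, 1), q.2⟩) = z), Γ V μ x
      = ∑ y ∈ univ.filter (fun y : (V 0 × V 1) × V 0 × V 1 => y.2.1 = E1 V z),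
          gp (M0 V μ) (M1 V μ) (M2 V μ) y := by
        refine filter_sum_equiv (EA V) _ _ (fun x => ?_) _
        constructor
        · intro hh
          rw [show (EA V x).2.1
              = E1 V (fun q : {q : Fin 2 // mea3 q 1} => x ⟨(q.1, 1), q.2⟩) from rfl, hh]
        · intro hh
          exact (E1 V).injective
            (show E1 V (fun q : {q : Fin 2 // mea3 q 1} => x ⟨(q.1, 1), q.2⟩) = E1 V z from hh)
    _ = margin (gp (M0 V μ) (M1 V μ) (M2 V μ)) (fun y => y.2.1) (E1 V z) := by rw [margin]
    _ = M1 V μ (E1 V z) := by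
        rw [gp_margin_21 (M0 V μ) (M1 V μ) (M2 V μ) (M0_isDist V μ hdist)
          (M1_isDist V μ hdist) (M2_isDist V μ hdist)]
    _ = μ 1 z := congrArg (μ 1) ((E1 V).left_inv z)

lemma Γ_coupling2 (hdist : ∀ c, IsDist (μ c)) :
    margin (Γ V μ) (fun x (q : {q : Fin 2 // mea3 q 2}) => x ⟨(q.1, 2), q.2⟩) = μ 2 := by
  funext z
  rw [margin]
  calc ∑ x ∈ univ.filter
        (fun x : PiAll V => (fun q : {q : Fin 2 // mea3 q 2} => x ⟨(q.1, 2), q.2⟩) = z), Γ V μ x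
      = ∑ y ∈ univ.filter (fun y : (V 0 × V 1) × V 0 × V 1 => y.2.2 = E2 V z),
          gp (M0 V μ) (M1 V μ) (M2 V μ) y := by
        refine filter_sum_equiv (EA V) _ _ (fun x => ?_) _
        constructor
        · intro hh
          rw [show (EA V x).2.2
              = E2 V (fun q : {q : Fin 2 // mea3 q 2} => x ⟨(q.1, 2), q.2⟩) from rfl, hh]
        · intro hh
          exact (E2 V).injective
            (show E2 V (fun q : {q : Fin 2 // mea3 q 2} => x ⟨(q.1, 2), q.2⟩) = E2 V z from hh)
    _ = margin (gp (M0 V μ) (M1 V μ) (M2 V μ)) (fun y => y.2.2) (E2 V z) := by rw [margin]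
    _ = M2 V μ (E2 V z) := by
        rw [gp_margin_22 (M0 V μ) (M1 V μ) (M2 V μ) (M0_isDist V μ hdist)
          (M1_isDist V μ hdist) (M2_isDist V μ hdist)]
    _ = μ 2 z := congrArg (μ 2) ((E2 V).left_inv z)

/-! ### Identification of single-coordinate marginals -/

set_option maxHeartbeats 1000000

lemma marg_00 (h : mea3 0 0) :
    margin (μ 0) (fun x => x ⟨0, h⟩) = margin (M0 V μ) Prod.fst := by
  funext a
  rw [margin, margin]
  calc ∑ z ∈ univ.filter (fun z : Pi0 V => z ⟨0, h⟩ = a), μ 0 z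
      = ∑ z ∈ univ.filter (fun z : Pi0 V => z ⟨0, h⟩ = a), M0 V μ (E0 V z) :=
        Finset.sum_congr rfl fun z _ => (congrArg (μ 0) ((E0 V).left_inv z)).symm
    _ = ∑ v ∈ univ.filter (fun v : V 0 × V 1 => v.1 = a), M0 V μ v :=
        filter_sum_equiv (E0 V) (fun z : Pi0 V => z ⟨0, h⟩ = a)
          (fun v : V 0 × V 1 => v.1 = a) (fun z => Iff.rfl) (M0 V μ)

lemma marg_10 (h : mea3 1 0) :
    margin (μ 0) (fun x => x ⟨1, h⟩) = margin (M0 V μ) Prod.snd := by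
  funext b
  rw [margin, margin]
  calc ∑ z ∈ univ.filter (fun z : Pi0 V => z ⟨1, h⟩ = b), μ 0 z
      = ∑ z ∈ univ.filter (fun z : Pi0 V => z ⟨1, h⟩ = b), M0 V μ (E0 V z) :=
        Finset.sum_congr rfl fun z _ => (congrArg (μ 0) ((E0 V).left_inv z)).symm
    _ = ∑ v ∈ univ.filter (fun v : V 0 × V 1 => v.2 = b), M0 V μ v :=
        filter_sum_equiv (E0 V) (fun z : Pi0 V => z ⟨1, h⟩ = b)
          (fun v : V 0 × V 1 => v.2 = b) (fun z => Iff.rfl) (M0 V μ)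

lemma marg_01 (h : mea3 0 1) :
    margin (μ 1) (fun x => x ⟨0, h⟩) = M1 V μ := by
  funext a
  rw [margin]
  calc ∑ z ∈ univ.filter (fun z : Pi1 V => z ⟨0, h⟩ = a), μ 1 z
      = ∑ z ∈ univ.filter (fun z : Pi1 V => z ⟨0, h⟩ = a), M1 V μ (E1 V z) :=
        Finset.sum_congr rfl fun z _ => (congrArg (μ 1) ((E1 V).left_inv z)).symm
    _ = ∑ v ∈ univ.filter (fun v : V 0 => v = a), M1 V μ v :=
        filter_sum_equiv (E1 V) (fun z : Pi1 V => z ⟨0, h⟩ = a)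
          (fun v : V 0 => v = a) (fun z => Iff.rfl) (M1 V μ)
    _ = M1 V μ a := by
        rw [Finset.sum_filter, Finset.sum_ite_eq' univ a (M1 V μ)]
        simp

lemma marg_12 (h : mea3 1 2) :
    margin (μ 2) (fun x => x ⟨1, h⟩) = M2 V μ := by
  funext b
  rw [margin]
  calc ∑ z ∈ univ.filter (fun z : Pi2 V => z ⟨1, h⟩ = b), μ 2 z
      = ∑ z ∈ univ.filter (fun z : Pi2 V => z ⟨1, h⟩ = b), M2 V μ (E2 V z) :=
        Finset.sum_congr rfl fun z _ => (congrArg (μ 2) ((E2 V).left_inv z)).symm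
    _ = ∑ v ∈ univ.filter (fun v : V 1 => v = b), M2 V μ v :=
        filter_sum_equiv (E2 V) (fun z : Pi2 V => z ⟨1, h⟩ = b)
          (fun v : V 1 => v = b) (fun z => Iff.rfl) (M2 V μ)
    _ = M2 V μ b := by
        rw [Finset.sum_filter, Finset.sum_ite_eq' univ b (M2 V μ)]
        simp

/-! ### Identification of the diagonal (connection) probabilities -/

lemma diag_01 (hdist : ∀ c, IsDist (μ c)) (h : mea3 0 0) (h' : mea3 0 1) :
    ∑ x ∈ univ.filter (fun x : PiAll V => x ⟨(0, 0), h⟩ = x ⟨(0, 1), h'⟩), Γ V μ x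
      = mdiag (margin (M0 V μ) Prod.fst) (M1 V μ) := by
  calc ∑ x ∈ univ.filter (fun x : PiAll V => x ⟨(0, 0), h⟩ = x ⟨(0, 1), h'⟩), Γ V μ x
      = ∑ y ∈ univ.filter (fun y : (V 0 × V 1) × V 0 × V 1 => y.1.1 = y.2.1),
          gp (M0 V μ) (M1 V μ) (M2 V μ) y :=
        filter_sum_equiv (EA V) (fun x : PiAll V => x ⟨(0, 0), h⟩ = x ⟨(0, 1), h'⟩)
          (fun y : (V 0 × V 1) × V 0 × V 1 => y.1.1 = y.2.1) (fun x => Iff.rfl)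
          (gp (M0 V μ) (M1 V μ) (M2 V μ))
    _ = _ := gp_diag1 (M0 V μ) (M1 V μ) (M2 V μ) (M0_isDist V μ hdist)
          (M1_isDist V μ hdist) (M2_isDist V μ hdist)

lemma diag_10 (hdist : ∀ c, IsDist (μ c)) (h : mea3 0 1) (h' : mea3 0 0) :
    ∑ x ∈ univ.filter (fun x : PiAll V => x ⟨(0, 1), h⟩ = x ⟨(0, 0), h'⟩), Γ V μ x
      = mdiag (M1 V μ) (margin (M0 V μ) Prod.fst) := by
  calc ∑ x ∈ univ.filter (fun x : PiAll V => x ⟨(0, 1), h⟩ = x ⟨(0, 0), h'⟩), Γ V μ x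
      = ∑ y ∈ univ.filter (fun y : (V 0 × V 1) × V 0 × V 1 => y.1.1 = y.2.1),
          gp (M0 V μ) (M1 V μ) (M2 V μ) y :=
        filter_sum_equiv (EA V) (fun x : PiAll V => x ⟨(0, 1), h⟩ = x ⟨(0, 0), h'⟩)
          (fun y : (V 0 × V 1) × V 0 × V 1 => y.1.1 = y.2.1) (fun x => eq_comm)
          (gp (M0 V μ) (M1 V μ) (M2 V μ))
    _ = mdiag (margin (M0 V μ) Prod.fst) (M1 V μ) :=
        gp_diag1 (M0 V μ) (M1 V μ) (M2 V μ) (M0_isDist V μ hdist)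
          (M1_isDist V μ hdist) (M2_isDist V μ hdist)
    _ = _ := mdiag_comm _ _

lemma diag_02 (hdist : ∀ c, IsDist (μ c)) (h : mea3 1 0) (h' : mea3 1 2) :
    ∑ x ∈ univ.filter (fun x : PiAll V => x ⟨(1, 0), h⟩ = x ⟨(1, 2), h'⟩), Γ V μ x
      = mdiag (margin (M0 V μ) Prod.snd) (M2 V μ) := by
  calc ∑ x ∈ univ.filter (fun x : PiAll V => x ⟨(1, 0), h⟩ = x ⟨(1, 2), h'⟩), Γ V μ x
      = ∑ y ∈ univ.filter (fun y : (V 0 × V 1) × V 0 × V 1 => y.1.2 = y.2.2),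
          gp (M0 V μ) (M1 V μ) (M2 V μ) y :=
        filter_sum_equiv (EA V) (fun x : PiAll V => x ⟨(1, 0), h⟩ = x ⟨(1, 2), h'⟩)
          (fun y : (V 0 × V 1) × V 0 × V 1 => y.1.2 = y.2.2) (fun x => Iff.rfl)
          (gp (M0 V μ) (M1 V μ) (M2 V μ))
    _ = _ := gp_diag2 (M0 V μ) (M1 V μ) (M2 V μ) (M0_isDist V μ hdist)
          (M1_isDist V μ hdist) (M2_isDist V μ hdist)

lemma diag_20 (hdist : ∀ c, IsDist (μ c)) (h : mea3 1 2) (h' : mea3 1 0) :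
    ∑ x ∈ univ.filter (fun x : PiAll V => x ⟨(1, 2), h⟩ = x ⟨(1, 0), h'⟩), Γ V μ x
      = mdiag (M2 V μ) (margin (M0 V μ) Prod.snd) := by
  calc ∑ x ∈ univ.filter (fun x : PiAll V => x ⟨(1, 2), h⟩ = x ⟨(1, 0), h'⟩), Γ V μ x
      = ∑ y ∈ univ.filter (fun y : (V 0 × V 1) × V 0 × V 1 => y.1.2 = y.2.2),
          gp (M0 V μ) (M1 V μ) (M2 V μ) y :=
        filter_sum_equiv (EA V) (fun x : PiAll V => x ⟨(1, 2), h⟩ = x ⟨(1, 0), h'⟩)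
          (fun y : (V 0 × V 1) × V 0 × V 1 => y.1.2 = y.2.2) (fun x => eq_comm)
          (gp (M0 V μ) (M1 V μ) (M2 V μ))
    _ = mdiag (margin (M0 V μ) Prod.snd) (M2 V μ) :=
        gp_diag2 (M0 V μ) (M1 V μ) (M2 V μ) (M0_isDist V μ hdist)
          (M1_isDist V μ hdist) (M2_isDist V μ hdist)
    _ = _ := mdiag_comm _ _

end Main2

end CbD3

namespace CbD3

section Main3

variable (V : Fin 2 → Type) [∀ q, Fintype (V q)] [∀ q, DecidableEq (V q)]
variable (μ : ∀ c : Fin 3, (∀ q : {q : Fin 2 // mea3 q c}, V q.1) → ℝ)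

lemma mm_000 (hdist : ∀ c, IsDist (μ c)) (h h' : mea3 0 0) :
    IsGreatest
      {r : ℝ | ∃ ν : V 0 × V 0 → ℝ, IsDist ν ∧
          margin ν Prod.fst = margin (μ 0) (fun x => x ⟨0, h⟩) ∧
          margin ν Prod.snd = margin (μ 0) (fun x => x ⟨0, h'⟩) ∧
          r = ∑ v : V 0, ν (v, v)}
      (∑ x ∈ univ.filter (fun x : PiAll V => x ⟨(0, 0), h⟩ = x ⟨(0, 0), h'⟩), Γ V μ x) := by
  have hA := isDist_margin (M0_isDist V μ hdist) Prod.fst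
  rw [marg_00 V μ h, Finset.filter_true_of_mem (fun x _ => rfl),
    show (∑ x, Γ V μ x) = 1 from (Γ_isDist V μ hdist).2,
    show (1 : ℝ) = mdiag (margin (M0 V μ) Prod.fst) (margin (M0 V μ) Prod.fst) from
      (mdiag_self hA).symm]
  exact isGreatest_mdiag hA hA

lemma mm_001 (hdist : ∀ c, IsDist (μ c)) (h : mea3 0 0) (h' : mea3 0 1) :
    IsGreatest
      {r : ℝ | ∃ ν : V 0 × V 0 → ℝ, IsDist ν ∧
          margin ν Prod.fst = margin (μ 0) (fun x => x ⟨0, h⟩) ∧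
          margin ν Prod.snd = margin (μ 1) (fun x => x ⟨0, h'⟩) ∧
          r = ∑ v : V 0, ν (v, v)}
      (∑ x ∈ univ.filter (fun x : PiAll V => x ⟨(0, 0), h⟩ = x ⟨(0, 1), h'⟩), Γ V μ x) := by
  rw [marg_00 V μ h, marg_01 V μ h', diag_01 V μ hdist h h']
  exact isGreatest_mdiag (isDist_margin (M0_isDist V μ hdist) Prod.fst) (M1_isDist V μ hdist)

lemma mm_010 (hdist : ∀ c, IsDist (μ c)) (h : mea3 0 1) (h' : mea3 0 0) :
    IsGreatest
      {r : ℝ | ∃ ν : V 0 × V 0 → ℝ, IsDist ν ∧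
          margin ν Prod.fst = margin (μ 1) (fun x => x ⟨0, h⟩) ∧
          margin ν Prod.snd = margin (μ 0) (fun x => x ⟨0, h'⟩) ∧
          r = ∑ v : V 0, ν (v, v)}
      (∑ x ∈ univ.filter (fun x : PiAll V => x ⟨(0, 1), h⟩ = x ⟨(0, 0), h'⟩), Γ V μ x) := by
  rw [marg_01 V μ h, marg_00 V μ h', diag_10 V μ hdist h h']
  exact isGreatest_mdiag (M1_isDist V μ hdist) (isDist_margin (M0_isDist V μ hdist) Prod.fst)

lemma mm_011 (hdist : ∀ c, IsDist (μ c)) (h h' : mea3 0 1) :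
    IsGreatest
      {r : ℝ | ∃ ν : V 0 × V 0 → ℝ, IsDist ν ∧
          margin ν Prod.fst = margin (μ 1) (fun x => x ⟨0, h⟩) ∧
          margin ν Prod.snd = margin (μ 1) (fun x => x ⟨0, h'⟩) ∧
          r = ∑ v : V 0, ν (v, v)}
      (∑ x ∈ univ.filter (fun x : PiAll V => x ⟨(0, 1), h⟩ = x ⟨(0, 1), h'⟩), Γ V μ x) := by
  have hM := M1_isDist V μ hdist
  rw [marg_01 V μ h, Finset.filter_true_of_mem (fun x _ => rfl),
    show (∑ x, Γ V μ x) = 1 from (Γ_isDist V μ hdist).2,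
    show (1 : ℝ) = mdiag (M1 V μ) (M1 V μ) from (mdiag_self hM).symm]
  exact isGreatest_mdiag hM hM

lemma mm_100 (hdist : ∀ c, IsDist (μ c)) (h h' : mea3 1 0) :
    IsGreatest
      {r : ℝ | ∃ ν : V 1 × V 1 → ℝ, IsDist ν ∧
          margin ν Prod.fst = margin (μ 0) (fun x => x ⟨1, h⟩) ∧
          margin ν Prod.snd = margin (μ 0) (fun x => x ⟨1, h'⟩) ∧
          r = ∑ v : V 1, ν (v, v)}
      (∑ x ∈ univ.filter (fun x : PiAll V => x ⟨(1, 0), h⟩ = x ⟨(1, 0), h'⟩), Γ V μ x) := by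
  have hB := isDist_margin (M0_isDist V μ hdist) Prod.snd
  rw [marg_10 V μ h, Finset.filter_true_of_mem (fun x _ => rfl),
    show (∑ x, Γ V μ x) = 1 from (Γ_isDist V μ hdist).2,
    show (1 : ℝ) = mdiag (margin (M0 V μ) Prod.snd) (margin (M0 V μ) Prod.snd) from
      (mdiag_self hB).symm]
  exact isGreatest_mdiag hB hB

lemma mm_102 (hdist : ∀ c, IsDist (μ c)) (h : mea3 1 0) (h' : mea3 1 2) :
    IsGreatest
      {r : ℝ | ∃ ν : V 1 × V 1 → ℝ, IsDist ν ∧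
          margin ν Prod.fst = margin (μ 0) (fun x => x ⟨1, h⟩) ∧
          margin ν Prod.snd = margin (μ 2) (fun x => x ⟨1, h'⟩) ∧
          r = ∑ v : V 1, ν (v, v)}
      (∑ x ∈ univ.filter (fun x : PiAll V => x ⟨(1, 0), h⟩ = x ⟨(1, 2), h'⟩), Γ V μ x) := by
  rw [marg_10 V μ h, marg_12 V μ h', diag_02 V μ hdist h h']
  exact isGreatest_mdiag (isDist_margin (M0_isDist V μ hdist) Prod.snd) (M2_isDist V μ hdist)

lemma mm_120 (hdist : ∀ c, IsDist (μ c)) (h : mea3 1 2) (h' : mea3 1 0) :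
    IsGreatest
      {r : ℝ | ∃ ν : V 1 × V 1 → ℝ, IsDist ν ∧
          margin ν Prod.fst = margin (μ 2) (fun x => x ⟨1, h⟩) ∧
          margin ν Prod.snd = margin (μ 0) (fun x => x ⟨1, h'⟩) ∧
          r = ∑ v : V 1, ν (v, v)}
      (∑ x ∈ univ.filter (fun x : PiAll V => x ⟨(1, 2), h⟩ = x ⟨(1, 0), h'⟩), Γ V μ x) := by
  rw [marg_12 V μ h, marg_10 V μ h', diag_20 V μ hdist h h']
  exact isGreatest_mdiag (M2_isDist V μ hdist) (isDist_margin (M0_isDist V μ hdist) Prod.snd)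

lemma mm_122 (hdist : ∀ c, IsDist (μ c)) (h h' : mea3 1 2) :
    IsGreatest
      {r : ℝ | ∃ ν : V 1 × V 1 → ℝ, IsDist ν ∧
          margin ν Prod.fst = margin (μ 2) (fun x => x ⟨1, h⟩) ∧
          margin ν Prod.snd = margin (μ 2) (fun x => x ⟨1, h'⟩) ∧
          r = ∑ v : V 1, ν (v, v)}
      (∑ x ∈ univ.filter (fun x : PiAll V => x ⟨(1, 2), h⟩ = x ⟨(1, 2), h'⟩), Γ V μ x) := by
  have hM := M2_isDist V μ hdist
  rw [marg_12 V μ h, Finset.filter_true_of_mem (fun x _ => rfl),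
    show (∑ x, Γ V μ x) = 1 from (Γ_isDist V μ hdist).2,
    show (1 : ℝ) = mdiag (M2 V μ) (M2 V μ) from (mdiag_self hM).symm]
  exact isGreatest_mdiag hM hM

end Main3

end CbD3


/-- Any system with exactly two contents `q₁, q₂` and three contexts — one context in which
both contents are measured, one in which only `q₁` is measured, and one in which only `q₂`
is measured — with finite value sets and arbitrary context distributions, is
CbD-noncontextual: it admits a multimaximally connected coupling. (In particular, every
factual–counterfactual subsystem of a cyclic system of rank 3 is noncontextual, so every
such system satisfies generalized counterfactual definiteness even when contextual.) -/
theorem two_content_system_cbd_noncontextual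
    (V : Fin 2 → Type) [∀ q, Fintype (V q)] [∀ q, DecidableEq (V q)]
    (μ : ∀ c : Fin 3, (∀ q : {q : Fin 2 // mea3 q c}, V q.1) → ℝ)
    (hdist : ∀ c, IsDist (μ c)) :
    CbDNoncontextual mea3 V μ := by
  unfold CbDNoncontextual
  refine ⟨CbD3.Γ V μ, ?_, ?_⟩
  · unfold IsCoupling
    refine ⟨CbD3.Γ_isDist V μ hdist, ?_⟩
    intro c
    fin_cases c
    · exact CbD3.Γ_coupling0 V μ hdist
    · exact CbD3.Γ_coupling1 V μ hdist
    · exact CbD3.Γ_coupling2 V μ hdist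
  · unfold IsMultimaximal
    intro q c c'
    fin_cases q <;> fin_cases c <;> fin_cases c' <;> intro h h' <;>
      first
      | exact absurd h (by decide)
      | exact absurd h' (by decide)
      | exact CbD3.mm_000 V μ hdist h h'
      | exact CbD3.mm_001 V μ hdist h h'
      | exact CbD3.mm_010 V μ hdist h h'
      | exact CbD3.mm_011 V μ hdist h h'
      | exact CbD3.mm_100 V μ hdist h h'
      | exact CbD3.mm_102 V μ hdist h h'
      | exact CbD3.mm_120 V μ hdist h h'
      | exact CbD3.mm_122 V μ hdist h h'
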